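/- Fix m ≥ 0 and a natural number w with a_m ≤ w < a_{m+1}, where a_0 = 0 and a_{m+1} = 2·3^m. Define, for pegs k ∈ {0,1,2}, the sequence d_{n,k} by d_{0,k} = 0 and the weighted Hanoi min-recurrence with weights w_{n,0} = 1 = w_{n,2}, w_{n,1} = w: d_{n+1,0} = min{ d_{n,1} + d_{n,2} + 1, 3·d_{n,0} + w + 1 }, d_{n+1,1} = min{ d_{n,0} + d_{n,2} + w, 3·d_{n,1} + 2 }, d_{n+1,2} = min{ d_{n,0} + d_{n,1} + 1, 3·d_{n,2} + w + 1 }. Then d_{n,0} = d_{n,2} for all n, and: (i) for 0 ≤ n ≤ m, d_n = (N_n, 2·N_n, N_n) with N_n = (3^n − 1)/2; (ii) for n > m, d_{n,0} = d_{n,2} = N_m·J_{n−m+2} + ℓ_{n−m} + w·ℓ_{n−m−1} and d_{n,1} = 2·N_m·J_{n−m+1} + 2·ℓ_{n−m−1} + 2·w·ℓ_{n−m−2} + w, where J_ν = (2^ν − (−1)^ν)/3 is the Jacobsthal sequence and ℓ_ν = Σ_{μ=0}^{ν} J_μ is the Lichtenberg sequence (with ℓ_{−1} = 0). -/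

import Mathlib

/-- The Jacobsthal numbers: `J n = (2^n - (-1)^n)/3` (exact integer division). -/
def jacobsthal (n : ℕ) : ℤ := (2 ^ n - (-1) ^ n) / 3

/-- `lichtenbergPred n = ℓ_{n-1} = ∑_{ν=0}^{n-1} J_ν`, so `lichtenbergPred 0 = ℓ_{-1} = 0`
and `lichtenbergPred (k+1) = ℓ_k`. -/
def lichtenbergPred (n : ℕ) : ℤ := ∑ ν ∈ Finset.range n, jacobsthal ν

/-- `N n = (3^n - 1)/2` (exact integer division). -/
def Nseq (n : ℕ) : ℤ := (3 ^ n - 1) / 2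

/-- The threshold sequence: `a 0 = 0`, `a (m+1) = 2 * 3^m`. -/
def threshold : ℕ → ℕ
  | 0 => 0
  | m + 1 => 2 * 3 ^ m


lemma jac3 (n : ℕ) : 3 * jacobsthal n = 2 ^ n - (-1) ^ n := by
  have hdvd : (3:ℤ) ∣ 2 ^ n - (-1) ^ n := by
    induction n with
    | zero => norm_num
    | succ k ih =>
      obtain ⟨c, hc⟩ := ih
      exact ⟨2 * c + (-1) ^ k, by linear_combination 2 * hc⟩
  exact Int.mul_ediv_cancel' hdvd

lemma jac_rec (n : ℕ) : jacobsthal (n+2) = jacobsthal (n+1) + 2 * jacobsthal n := by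
  have h1 := jac3 n
  have h2 := jac3 (n+1)
  have h3 := jac3 (n+2)
  have e : (2:ℤ)^(n+2) - (-1)^(n+2) = 2^(n+1) - (-1)^(n+1) + 2*(2^n - (-1)^n) := by ring
  linarith

lemma jac_nonneg (n : ℕ) : 0 ≤ jacobsthal n := by
  have h := jac3 n
  have h2 : (1:ℤ) ≤ 2 ^ n := one_le_pow₀ (by norm_num)
  rcases neg_one_pow_eq_or ℤ n with he | he <;> rw [he] at h <;> linarith

lemma jac_mono (n : ℕ) : jacobsthal n ≤ jacobsthal (n+1) := by
  cases n with
  | zero => decide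
  | succ k => linarith [jac_rec k, jac_nonneg k]

lemma lich_succ (n : ℕ) : lichtenbergPred (n+1) = lichtenbergPred n + jacobsthal n :=
  Finset.sum_range_succ _ _

lemma lich_nonneg (n : ℕ) : 0 ≤ lichtenbergPred n :=
  Finset.sum_nonneg fun i _ => jac_nonneg i

lemma lich_rec (n : ℕ) :
    lichtenbergPred (n+2) = lichtenbergPred (n+1) + 2 * lichtenbergPred n + 1 := by
  induction n with
  | zero => decide
  | succ k ih =>
    linarith [lich_succ (k+2), jac_rec k, lich_succ (k+1), lich_succ k]

lemma jac_le (n : ℕ) : jacobsthal n ≤ 2 * lichtenbergPred n + 1 := by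
  induction n with
  | zero => decide
  | succ k ih =>
    cases k with
    | zero => decide
    | succ j =>
      linarith [jac_rec j, jac_mono j, lich_succ (j+1), ih]

lemma lich_le (n : ℕ) : lichtenbergPred (n+1) ≤ 3 * lichtenbergPred n + 1 := by
  linarith [lich_succ n, jac_le n]

lemma two_Nseq (n : ℕ) : 2 * Nseq n = 3 ^ n - 1 := by
  have hdvd : (2:ℤ) ∣ 3 ^ n - 1 := by
    induction n with
    | zero => norm_num
    | succ k ih =>
      obtain ⟨c, hc⟩ := ih
      exact ⟨3 * c + 1, by linear_combination 3 * hc⟩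
  exact Int.mul_ediv_cancel' hdvd

lemma Nseq_rec (n : ℕ) : Nseq (n+1) = 3 * Nseq n + 1 := by
  have h1 := two_Nseq n
  have h2 := two_Nseq (n+1)
  have e : (3:ℤ)^(n+1) = 3 * 3^n := by ring
  linarith

lemma Nseq_nonneg (n : ℕ) : 0 ≤ Nseq n := by
  have h := two_Nseq n
  have h2 : (1:ℤ) ≤ 3 ^ n := one_le_pow₀ (by norm_num)
  linarith

/-- value of `d (m+s+1) 0` -/
def auxA (m w s : ℕ) : ℤ :=
  Nseq m * jacobsthal (s+3) + lichtenbergPred (s+2) + (w:ℤ) * lichtenbergPred (s+1)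

/-- value of `d (m+s+1) 1` -/
def auxB (m w s : ℕ) : ℤ :=
  2 * Nseq m * jacobsthal (s+2) + 2 * lichtenbergPred (s+1)
    + 2 * (w:ℤ) * lichtenbergPred s + (w:ℤ)

theorem stmt19 (m : ℕ) (w : ℕ)
    (hw1 : threshold m ≤ w) (hw2 : w < threshold (m + 1))
    (d : ℕ → Fin 3 → ℤ)
    (h0 : ∀ k, d 0 k = 0)
    (hrec0 : ∀ n, d (n + 1) 0 = min (d n 1 + d n 2 + 1) (3 * d n 0 + (w : ℤ) + 1))
    (hrec1 : ∀ n, d (n + 1) 1 = min (d n 0 + d n 2 + (w : ℤ)) (3 * d n 1 + 2))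
    (hrec2 : ∀ n, d (n + 1) 2 = min (d n 0 + d n 1 + 1) (3 * d n 2 + (w : ℤ) + 1)) :
    (∀ n : ℕ, d n 0 = d n 2) ∧
    (∀ n ≤ m, d n 0 = Nseq n ∧ d n 1 = 2 * Nseq n ∧ d n 2 = Nseq n) ∧
    (∀ n : ℕ, m < n →
      (d n 0 = Nseq m * jacobsthal (n - m + 2) + lichtenbergPred (n - m + 1)
          + (w : ℤ) * lichtenbergPred (n - m) ∧
       d n 2 = Nseq m * jacobsthal (n - m + 2) + lichtenbergPred (n - m + 1)
          + (w : ℤ) * lichtenbergPred (n - m) ∧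
       d n 1 = 2 * Nseq m * jacobsthal (n - m + 1) + 2 * lichtenbergPred (n - m)
          + 2 * (w : ℤ) * lichtenbergPred (n - m - 1) + (w : ℤ))) := by
  have hw0 : (0:ℤ) ≤ (w:ℤ) := Int.natCast_nonneg w
  have hwub : (w:ℤ) ≤ 4 * Nseq m + 2 := by
    have h1 : w < 2 * 3 ^ m := hw2
    have h2 : (w:ℤ) < 2 * 3 ^ m := by exact_mod_cast h1
    have h3 := two_Nseq m
    linarith
  have key : ∀ n : ℕ,
      (n ≤ m → d n 0 = Nseq n ∧ d n 1 = 2 * Nseq n ∧ d n 2 = Nseq n) ∧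
      (∀ s, n = m + s + 1 → d n 0 = auxA m w s ∧ d n 1 = auxB m w s ∧ d n 2 = auxA m w s) := by
    intro n
    induction n with
    | zero =>
      refine ⟨fun _ => ?_, fun s hs => by omega⟩
      have hN : Nseq 0 = 0 := by decide
      simp [h0, hN]
    | succ n ih =>
      rcases lt_trichotomy n m with h | h | h
      · -- n + 1 ≤ m, "pre-threshold" regime
        obtain ⟨hv0, hv1, hv2⟩ := ih.1 (le_of_lt h)
        refine ⟨fun _ => ?_, fun s hs => by omega⟩
        have hwlb : (2 * 3 ^ n : ℤ) ≤ (w:ℤ) := by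
          obtain ⟨k, rfl⟩ : ∃ k, m = k + 1 := ⟨m - 1, by omega⟩
          have h1 : (2 * 3 ^ n : ℕ) ≤ 2 * 3 ^ k :=
            Nat.mul_le_mul_left 2 (Nat.pow_le_pow_right (by norm_num) (by omega))
          have h2 : (2 * 3 ^ n : ℕ) ≤ w := le_trans h1 hw1
          exact_mod_cast h2
        have h4N : 4 * Nseq n + 2 = 2 * 3 ^ n := by have := two_Nseq n; linarith
        have hNr := Nseq_rec n
        refine ⟨?_, ?_, ?_⟩
        · rw [hrec0 n, hv0, hv1, hv2, min_eq_left (by linarith)]; linarith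
        · rw [hrec1 n, hv0, hv1, hv2, min_eq_right (by linarith)]; linarith
        · rw [hrec2 n, hv0, hv1, hv2, min_eq_left (by linarith)]; linarith
      · -- n = m : transition step, d (m+1) = (A 0, B 0, A 0)
        subst h
        obtain ⟨hv0, hv1, hv2⟩ := ih.1 le_rfl
        refine ⟨fun hle => by omega, fun s hs => ?_⟩
        obtain rfl : s = 0 := by omega
        have j2 : jacobsthal 2 = 1 := by decide
        have j3 : jacobsthal 3 = 3 := by decide
        have l0 : lichtenbergPred 0 = 0 := by decide
        have l1 : lichtenbergPred 1 = 0 := by decide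
        have l2 : lichtenbergPred 2 = 1 := by decide
        have hA : auxA n w 0 = 3 * Nseq n + 1 := by
          simp only [auxA, j3, l2, l1]; ring
        have hB : auxB n w 0 = 2 * Nseq n + (w:ℤ) := by
          simp only [auxB, j2, l1, l0]; ring
        refine ⟨?_, ?_, ?_⟩
        · rw [hrec0 n, hv0, hv1, hv2, min_eq_left (by linarith), hA]; ring
        · rw [hrec1 n, hv0, hv1, hv2, min_eq_left (by linarith), hB]; ring
        · rw [hrec2 n, hv0, hv1, hv2, min_eq_left (by linarith), hA]; ring
      · -- m < n : post-threshold regime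
        obtain ⟨s, rfl⟩ : ∃ s, n = m + s + 1 := ⟨n - m - 1, by omega⟩
        obtain ⟨hv0, hv1, hv2⟩ := ih.2 s rfl
        refine ⟨fun hle => by omega, fun s' hs' => ?_⟩
        obtain rfl : s' = s + 1 := by omega
        have hN := Nseq_nonneg m
        -- ineq (i): B s ≤ 2 A s + w
        have hi : auxB m w s ≤ 2 * auxA m w s + (w:ℤ) := by
          have e : 2 * auxA m w s + (w:ℤ) - auxB m w s
              = 4 * Nseq m * jacobsthal (s+1) + 2 * jacobsthal (s+1)
                + 2 * (w:ℤ) * jacobsthal s := by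
            simp only [auxA, auxB]
            linear_combination 2 * Nseq m * jac_rec (s+1) + 2 * lich_succ (s+1)
              + 2 * (w:ℤ) * lich_succ s
          nlinarith [jac_nonneg (s+1), jac_nonneg s,
            mul_nonneg hN (jac_nonneg (s+1)), mul_nonneg hw0 (jac_nonneg s)]
        -- ineq (ii): 2 A s + w ≤ 3 B s + 2
        have hii : 2 * auxA m w s + (w:ℤ) ≤ 3 * auxB m w s + 2 := by
          have e : 3 * auxB m w s + 2 - (2 * auxA m w s + (w:ℤ))
              = 8 * Nseq m * jacobsthal s
                + (6 * lichtenbergPred (s+1) - 2 * lichtenbergPred (s+2) + 2)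
                + (w:ℤ) * (6 * lichtenbergPred s - 2 * lichtenbergPred (s+1) + 2) := by
            simp only [auxA, auxB]
            linear_combination (-2 : ℤ) * Nseq m * jac_rec (s+1) + 4 * Nseq m * jac_rec s
          nlinarith [mul_nonneg hN (jac_nonneg s), lich_le (s+1), lich_le s,
            mul_nonneg hw0 (by linarith [lich_le s] :
              (0:ℤ) ≤ 6 * lichtenbergPred s - 2 * lichtenbergPred (s+1) + 2)]
        have hA1 : auxA m w (s+1) = auxA m w s + auxB m w s + 1 := by
          simp only [auxA, auxB]
          linear_combination Nseq m * jac_rec (s+2) + lich_rec (s+1) + (w:ℤ) * lich_rec s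
        have hB1 : auxB m w (s+1) = 2 * auxA m w s + (w:ℤ) := by
          simp only [auxA, auxB]; ring
        refine ⟨?_, ?_, ?_⟩
        · rw [hrec0 (m+s+1), hv0, hv1, hv2, min_eq_left (by linarith), hA1]; ring_nf
        · rw [hrec1 (m+s+1), hv0, hv1, hv2, min_eq_left (by linarith), hB1]; ring
        · rw [hrec2 (m+s+1), hv0, hv1, hv2, min_eq_left (by linarith), hA1]
  refine ⟨?_, ?_, ?_⟩
  · intro n
    rcases le_or_gt n m with h | h
    · obtain ⟨h1, _, h3⟩ := (key n).1 h
      rw [h1, h3]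
    · obtain ⟨s, rfl⟩ : ∃ s, n = m + s + 1 := ⟨n - m - 1, by omega⟩
      obtain ⟨h1, _, h3⟩ := (key _).2 s rfl
      rw [h1, h3]
  · intro n hn; exact (key n).1 hn
  · intro n hn
    obtain ⟨s, rfl⟩ : ∃ s, n = m + s + 1 := ⟨n - m - 1, by omega⟩
    obtain ⟨h1, h2, h3⟩ := (key _).2 s rfl
    have e1 : m + s + 1 - m + 2 = s + 3 := by omega
    have e2 : m + s + 1 - m + 1 = s + 2 := by omega
    have e3 : m + s + 1 - m = s + 1 := by omega
    have e4 : m + s + 1 - m - 1 = s := by omega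
    rw [e4, e1, e2, e3]
    exact ⟨h1, h3, h2⟩
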